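/- With A = (x_A,0), D = (−x_A,0), x_A > 0, and target T = (x_T,y_T) with x_T > 0, y_T ≥ 0: the condition x_A² + y_T²/(1−α²) − x_T²/α² < 0 (the attacker-win region R_c) implies (sqrt((x_A+x_T)²+y_T²) − sqrt((x_A−x_T)²+y_T²))/(2x_A) > α, for α ∈ (0,1). -/
import Mathlib


/-- in the attacker-win region R_c the normalized distance-difference
exceeds the speed ratio α. -/
theorem stmt12 (α xA xT yT : ℝ) (hα : α ∈ Set.Ioo (0:ℝ) 1) (hxA : 0 < xA)
    (hxT : 0 < xT) (hyT : 0 ≤ yT)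
    (h : xA^2 + yT^2/(1-α^2) - xT^2/α^2 < 0) :
    α < (Real.sqrt ((xA+xT)^2 + yT^2) - Real.sqrt ((xA-xT)^2 + yT^2)) / (2*xA) := by
  obtain ⟨hα0, hα1⟩ := hα
  have hα2 : 0 < 1 - α^2 := by nlinarith
  have hα2' : (1 - α^2) ≠ 0 := ne_of_gt hα2
  have hαsq : (0:ℝ) < α^2 := pow_pos hα0 2
  have e1 : yT^2 = (1-α^2) * (yT^2/(1-α^2)) := by field_simp
  have e2 : xT^2 = α^2 * (xT^2/α^2) := by field_simp
  -- polynomial form of the hypothesis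
  have hineq : α^2*(1-α^2)*xA^2 + α^2*yT^2 < (1-α^2)*xT^2 := by
    nlinarith [mul_pos hαsq hα2, mul_lt_mul_of_pos_left h (mul_pos hαsq hα2)]
  -- xT > α * xA
  have hsq1 : α^2*xA^2 < xT^2 := by nlinarith [sq_nonneg yT, mul_pos hαsq hα2]
  have hxTα : α * xA < xT := by nlinarith [mul_pos hα0 hxA]
  set R2 := Real.sqrt ((xA-xT)^2 + yT^2) with hR2def
  have hR2nn : 0 ≤ R2 := Real.sqrt_nonneg _
  have hR2sq : R2^2 = (xA-xT)^2 + yT^2 := Real.sq_sqrt (by positivity)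
  -- key: α * R2 < xT - α^2 * xA
  have hpos : 0 < xT - α^2 * xA := by nlinarith
  have hstep : α * R2 < xT - α^2 * xA := by
    nlinarith [mul_pos hα0 (mul_pos hα0 hxA), sq_nonneg (α*R2 - (xT - α^2*xA)),
      mul_nonneg hα0.le hR2nn]
  -- hence R2 + 2*α*xA < sqrt ((xA+xT)^2 + yT^2)
  have hR1 : R2 + 2*α*xA < Real.sqrt ((xA+xT)^2 + yT^2) := by
    have hc : 0 ≤ R2 + 2*α*xA := by positivity
    have hsqlt : (R2 + 2*α*xA)^2 < (xA+xT)^2 + yT^2 := by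
      nlinarith [hR2sq, mul_lt_mul_of_pos_left hstep (show (0:ℝ) < 4*xA by linarith)]
    exact (Real.lt_sqrt hc).mpr hsqlt
  rw [lt_div_iff₀ (by positivity)]
  linarith
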